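/- arXiv:math/0701819 — 2 statements merged into one kernel-verified Lean document; each statement's English description precedes it below -/
import Mathlib

section
/- The spectrum of an almost periodic function f : ℝ^m → ℂ, defined as the set of λ ∈ ℝ^m for which the mean value lim_{T→∞}(2T)^{-m}∫_{[-T,T]^m} f(x) e^{-i⟨x,λ⟩} dx is nonzero, is at most countable. -/
open scoped UniformConvergence
open MeasureTheory Filter

def translates {m : ℕ} (f : (Fin m → ℝ) → ℂ) : Set ((Fin m → ℝ) →ᵤ ℂ) :=
  {g | ∃ t : Fin m → ℝ, g = UniformFun.ofFun fun x => f (x + t)}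

def AlmostPeriodic {m : ℕ} (f : (Fin m → ℝ) → ℂ) : Prop :=
  Continuous f ∧ IsCompact (closure (translates f))

namespace APSpec

variable {m : ℕ}

def box (m : ℕ) (T : ℝ) : Set (Fin m → ℝ) := {x | ∀ i, x i ∈ Set.Icc (-T) T}

lemma box_eq (T : ℝ) : box m T = Set.pi Set.univ (fun _ => Set.Icc (-T) T) := by
  ext x; simp only [box, Set.mem_setOf_eq, Set.mem_univ_pi]

lemma measurableSet_box (T : ℝ) : MeasurableSet (box m T) := by
  rw [box_eq]; exact MeasurableSet.univ_pi fun _ => measurableSet_Icc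

lemma isCompact_box (T : ℝ) : IsCompact (box m T) := by
  rw [box_eq]; exact isCompact_univ_pi fun _ => isCompact_Icc

lemma volume_box {T : ℝ} (hT : 0 ≤ T) : (volume (box m T)).toReal = (2*T)^m := by
  have h2 : T - (-T) = 2*T := by ring
  rw [box_eq, volume_pi_pi]
  simp only [Real.volume_Icc, h2, Finset.prod_const, Finset.card_univ, Fintype.card_fin]
  rw [ENNReal.toReal_pow, ENNReal.toReal_ofReal (by linarith)]

lemma integrableOn_box {g : (Fin m → ℝ) → ℂ} (hg : Continuous g) (T : ℝ) :
    IntegrableOn g (box m T) := hg.continuousOn.integrableOn_compact (isCompact_box T)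

lemma integrableOn_box_real {g : (Fin m → ℝ) → ℝ} (hg : Continuous g) (T : ℝ) :
    IntegrableOn g (box m T) := hg.continuousOn.integrableOn_compact (isCompact_box T)

noncomputable def eker (ν : Fin m → ℝ) (x : Fin m → ℝ) : ℂ :=
  Complex.exp (-(Complex.I * ∑ i, x i * ν i))

lemma eker_def' (ν x : Fin m → ℝ) :
    eker ν x = Complex.exp (-(Complex.I * ((∑ i, x i * ν i : ℝ) : ℂ))) := by
  unfold eker; push_cast; ring_nf

lemma continuous_eker (ν : Fin m → ℝ) : Continuous (eker ν) := by
  unfold eker; fun_prop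

lemma norm_eker (ν x : Fin m → ℝ) : ‖eker ν x‖ = 1 := by
  rw [eker_def', Complex.norm_exp]
  simp

lemma conj_eker (ν x : Fin m → ℝ) :
    (starRingEnd ℂ) (eker ν x) = eker (-ν) x := by
  rw [eker_def', eker_def', ← Complex.exp_conj]
  congr 1
  simp only [map_neg, map_mul, Complex.conj_I, Complex.conj_ofReal]
  rw [show ∑ i, x i * (-ν) i = -∑ i, x i * ν i by
    rw [← Finset.sum_neg_distrib]; exact Finset.sum_congr rfl fun i _ => by simp]
  push_cast; ring

lemma eker_mul (ν ρ x : Fin m → ℝ) : eker ν x * eker ρ x = eker (ν + ρ) x := by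
  rw [eker_def', eker_def', eker_def', ← Complex.exp_add]
  congr 1
  rw [show ∑ i, x i * (ν + ρ) i = (∑ i, x i * ν i) + ∑ i, x i * ρ i by
    rw [← Finset.sum_add_distrib]; exact Finset.sum_congr rfl fun i _ => by simp [Pi.add_apply]; ring]
  push_cast; ring

lemma eker_zero (x : Fin m → ℝ) : eker 0 x = 1 := by
  rw [eker_def']; simp


noncomputable def k1 (a t : ℝ) : ℂ := Complex.exp (-(Complex.I * ((t * a : ℝ) : ℂ)))

lemma continuous_k1 (a : ℝ) : Continuous (k1 a) := by unfold k1; fun_prop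

lemma integral_k1_eq {a T : ℝ} (ha : a ≠ 0) (hT : 0 ≤ T) :
    ∫ t in Set.Icc (-T) T, k1 a t =
      (Complex.exp (-(Complex.I*a) * T) - Complex.exp (-(Complex.I*a) * (-T))) / (-(Complex.I*a)) := by
  rw [MeasureTheory.integral_Icc_eq_integral_Ioc,
    ← intervalIntegral.integral_of_le (by linarith : -T ≤ T)]
  rw [show (fun t : ℝ => k1 a t) = fun t : ℝ => Complex.exp (-(Complex.I*a) * t) from
    funext fun t => by unfold k1; push_cast; ring_nf]
  exact_mod_cast integral_exp_mul_complex (neg_ne_zero.mpr (mul_ne_zero Complex.I_ne_zero (Complex.ofReal_ne_zero.mpr ha)))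

lemma norm_k1 (a t : ℝ) : ‖k1 a t‖ = 1 := by
  unfold k1; rw [Complex.norm_exp]; simp

lemma norm_integral_k1_le {a T : ℝ} (ha : a ≠ 0) (hT : 0 ≤ T) :
    ‖∫ t in Set.Icc (-T) T, k1 a t‖ ≤ 2 / |a| := by
  rw [integral_k1_eq ha hT]
  have hnc : ‖(-(Complex.I * (a:ℂ)))‖ = |a| := by
    simp
  rw [norm_div, hnc]
  gcongr
  calc ‖Complex.exp (-(Complex.I*a) * T) - Complex.exp (-(Complex.I*a) * (-T))‖
      ≤ ‖Complex.exp (-(Complex.I*a) * T)‖ + ‖Complex.exp (-(Complex.I*a) * (-T))‖ := norm_sub_le _ _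
    _ = 2 := by norm_num [Complex.norm_exp]

lemma norm_integral_k1_le' {a T : ℝ} (hT : 0 ≤ T) :
    ‖∫ t in Set.Icc (-T) T, k1 a t‖ ≤ 2 * T := by
  have := norm_setIntegral_le_of_norm_le_const (μ := volume) (s := Set.Icc (-T) T)
    (f := k1 a) (C := 1) (by rw [Real.volume_Icc]; exact ENNReal.ofReal_lt_top)
    (fun t _ => le_of_eq (norm_k1 a t))
  rw [measureReal_def, Real.volume_Icc, ENNReal.toReal_ofReal (by linarith)] at this
  calc ‖∫ t in Set.Icc (-T) T, k1 a t‖ ≤ 1 * (T - -T) := this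
    _ = 2 * T := by ring

end APSpec
namespace APSpec
variable {m : ℕ}

lemma eker_eq_prod (ν : Fin m → ℝ) (x : Fin m → ℝ) :
    eker ν x = ∏ i, k1 (ν i) (x i) := by
  unfold k1
  rw [eker_def', ← Complex.exp_sum]
  congr 1
  push_cast
  rw [Finset.mul_sum, Finset.sum_neg_distrib]

lemma setIntegral_box_prod (g : Fin m → ℝ → ℂ) (T : ℝ) :
    ∫ x in box m T, ∏ i, g i (x i) = ∏ i, ∫ t in Set.Icc (-T) T, g i t := by
  rw [← MeasureTheory.integral_indicator (measurableSet_box T)]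
  have hpt : (box m T).indicator (fun x => ∏ i, g i (x i)) =
      fun x => ∏ i, (Set.Icc (-T) T).indicator (g i) (x i) := by
    funext x
    by_cases hx : x ∈ box m T
    · rw [Set.indicator_of_mem hx]
      exact (Finset.prod_congr rfl fun i _ => (Set.indicator_of_mem (hx i) _).symm)
    · rw [Set.indicator_of_notMem hx]
      have : ∃ i, x i ∉ Set.Icc (-T) T := by
        by_contra h; push_neg at h; exact hx h
      obtain ⟨i, hi⟩ := this
      exact (Finset.prod_eq_zero (Finset.mem_univ i) (Set.indicator_of_notMem hi _)).symm
  rw [hpt, MeasureTheory.integral_fintype_prod_volume_eq_prod]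
  exact Finset.prod_congr rfl fun i _ => MeasureTheory.integral_indicator measurableSet_Icc

noncomputable def avg (T : ℝ) (g : (Fin m → ℝ) → ℂ) : ℂ :=
  (((2 * T) ^ m)⁻¹ : ℝ) • ∫ x in box m T, g x

lemma avg_eker_eq_prod {T : ℝ} (hT : 0 < T) (ν : Fin m → ℝ) :
    avg T (eker ν) = ∏ i, (((2*T)⁻¹ : ℝ) : ℂ) * ∫ t in Set.Icc (-T) T, k1 (ν i) t := by
  unfold avg
  simp only [eker_eq_prod]
  rw [setIntegral_box_prod, Finset.prod_mul_distrib, Finset.prod_const, Finset.card_univ,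
    Fintype.card_fin, Complex.real_smul]
  push_cast
  rw [inv_pow]

lemma tendsto_avg_eker (ν : Fin m → ℝ) :
    Tendsto (fun T => avg T (eker ν)) atTop (nhds (if ν = 0 then 1 else 0)) := by
  by_cases hν : ν = 0
  · rw [if_pos hν, hν]
    have : ∀ᶠ T in atTop, avg T (eker (0 : Fin m → ℝ)) = 1 := by
      filter_upwards [eventually_gt_atTop (0:ℝ)] with T hT
      unfold avg
      simp only [eker_zero]
      rw [MeasureTheory.setIntegral_const, measureReal_def, volume_box hT.le, smul_smul,
        inv_mul_cancel₀ (by positivity), one_smul]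
    exact Tendsto.congr' (this.mono fun T h => h.symm) tendsto_const_nhds
  · rw [if_neg hν]
    obtain ⟨i₀, hi₀⟩ := Function.ne_iff.mp hν
    apply squeeze_zero_norm' (a := fun T => |ν i₀|⁻¹ * T⁻¹)
    · filter_upwards [eventually_gt_atTop (0:ℝ)] with T hT
      rw [avg_eker_eq_prod hT, norm_prod]
      have hfac : ∀ i, ‖(((2*T)⁻¹ : ℝ) : ℂ) * ∫ t in Set.Icc (-T) T, k1 (ν i) t‖ ≤ 1 := by
        intro i
        rw [norm_mul, Complex.norm_real, norm_inv, Real.norm_eq_abs,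
          abs_of_pos (by linarith)]
        calc (2*T)⁻¹ * ‖∫ t in Set.Icc (-T) T, k1 (ν i) t‖
            ≤ (2*T)⁻¹ * (2*T) := by
              gcongr
              exact norm_integral_k1_le' hT.le
          _ = 1 := inv_mul_cancel₀ (by linarith)
      have hfac₀ : ‖(((2*T)⁻¹ : ℝ) : ℂ) * ∫ t in Set.Icc (-T) T, k1 (ν i₀) t‖ ≤ |ν i₀|⁻¹ * T⁻¹ := by
        rw [norm_mul, Complex.norm_real, norm_inv, Real.norm_eq_abs,
          abs_of_pos (by linarith)]
        calc (2*T)⁻¹ * ‖∫ t in Set.Icc (-T) T, k1 (ν i₀) t‖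
            ≤ (2*T)⁻¹ * (2 / |ν i₀|) := by
              gcongr
              exact norm_integral_k1_le hi₀ hT.le
          _ = |ν i₀|⁻¹ * T⁻¹ := by
              field_simp
      calc ∏ i, ‖(((2*T)⁻¹ : ℝ) : ℂ) * ∫ t in Set.Icc (-T) T, k1 (ν i) t‖
          ≤ ∏ i, (if i = i₀ then |ν i₀|⁻¹ * T⁻¹ else 1) := by
            apply Finset.prod_le_prod (fun i _ => norm_nonneg _)
            intro i _
            by_cases h : i = i₀
            · rw [if_pos h, h]; exact hfac₀
            · rw [if_neg h]; exact hfac i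
        _ = |ν i₀|⁻¹ * T⁻¹ := by
            rw [Finset.prod_ite_eq' Finset.univ i₀ (fun _ => |ν i₀|⁻¹ * T⁻¹)]
            simp
    · have := tendsto_inv_atTop_zero.const_mul (|ν i₀|⁻¹)
      simpa using this

end APSpec
namespace APSpec
variable {m : ℕ}

lemma avg_sum {ι : Type*} (S : Finset ι) (g : ι → (Fin m → ℝ) → ℂ) (T : ℝ)
    (hg : ∀ i ∈ S, Continuous (g i)) :
    avg T (fun x => ∑ i ∈ S, g i x) = ∑ i ∈ S, avg T (g i) := by
  unfold avg
  rw [MeasureTheory.integral_finset_sum S (fun i hi => integrableOn_box (hg i hi) T),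
    Finset.smul_sum]

lemma avg_const_mul (c : ℂ) (g : (Fin m → ℝ) → ℂ) (T : ℝ) :
    avg T (fun x => c * g x) = c * avg T g := by
  unfold avg; rw [MeasureTheory.integral_const_mul, mul_smul_comm]

lemma bessel {f : (Fin m → ℝ) → ℂ} (hfc : Continuous f) {C : ℝ} (hC : ∀ x, ‖f x‖ ≤ C)
    {M : (Fin m → ℝ) → ℂ}
    (hM : ∀ lam : Fin m → ℝ, Filter.Tendsto (fun T => avg T (fun x => f x * eker lam x))
      Filter.atTop (nhds (M lam)))
    (S : Finset (Fin m → ℝ)) :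
    ∑ lam ∈ S, Complex.normSq (M lam) ≤ C ^ 2 := by
  classical
  set B : ℝ := ∑ lam ∈ S, Complex.normSq (M lam) with hB
  set s : (Fin m → ℝ) → ℂ := fun x => ∑ μ ∈ S, M μ * eker (-μ) x with hs
  have hsc : Continuous s := continuous_finset_sum _ fun μ _ => continuous_const.mul (continuous_eker _)
  have hconj : ∀ x, (starRingEnd ℂ) (s x) = ∑ lam ∈ S, (starRingEnd ℂ) (M lam) * eker lam x := by
    intro x
    simp only [hs, map_sum, map_mul, conj_eker, neg_neg]
  have hcsc : Continuous (fun x => (starRingEnd ℂ) (s x)) := Complex.continuous_conj.comp hsc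
  -- Φ : limit of avg (conj s * f)
  have hΦ : Filter.Tendsto (fun T => avg T (fun x => (starRingEnd ℂ) (s x) * f x))
      Filter.atTop (nhds ((B : ℂ))) := by
    have heq : ∀ T : ℝ, avg T (fun x => (starRingEnd ℂ) (s x) * f x)
        = ∑ lam ∈ S, (starRingEnd ℂ) (M lam) * avg T (fun x => f x * eker lam x) := by
      intro T
      rw [show (fun x => (starRingEnd ℂ) (s x) * f x)
          = fun x => ∑ lam ∈ S, (starRingEnd ℂ) (M lam) * (f x * eker lam x) from
        funext fun x => by rw [hconj, Finset.sum_mul]; exact Finset.sum_congr rfl fun lam _ => by ring]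
      rw [avg_sum S (fun lam x => (starRingEnd ℂ) (M lam) * (f x * eker lam x)) T (fun lam _ => continuous_const.mul (hfc.mul (continuous_eker lam)))]
      exact Finset.sum_congr rfl fun lam _ => avg_const_mul _ _ _
    have h1 : Filter.Tendsto (fun T => ∑ lam ∈ S, (starRingEnd ℂ) (M lam) * avg T (fun x => f x * eker lam x))
        Filter.atTop (nhds (∑ lam ∈ S, (starRingEnd ℂ) (M lam) * M lam)) :=
      tendsto_finset_sum _ fun lam _ => (hM lam).const_mul _
    have h2 : (∑ lam ∈ S, (starRingEnd ℂ) (M lam) * M lam) = (B : ℂ) := by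
      rw [hB]; push_cast
      exact Finset.sum_congr rfl fun lam _ => by rw [mul_comm, Complex.mul_conj]
    rw [← h2]
    exact h1.congr fun T => (heq T).symm
  -- Ψ : limit of avg (conj s * s)
  have hΨ : Filter.Tendsto (fun T => avg T (fun x => (starRingEnd ℂ) (s x) * s x))
      Filter.atTop (nhds ((B : ℂ))) := by
    have hexp : ∀ x, (starRingEnd ℂ) (s x) * s x
        = ∑ lam ∈ S, ∑ μ ∈ S, ((starRingEnd ℂ) (M lam) * M μ) * eker (lam - μ) x := by
      intro x
      rw [hconj, hs, Finset.sum_mul_sum]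
      refine Finset.sum_congr rfl fun lam _ => Finset.sum_congr rfl fun μ _ => ?_
      calc ((starRingEnd ℂ) (M lam) * eker lam x) * (M μ * eker (-μ) x)
          = ((starRingEnd ℂ) (M lam) * M μ) * (eker lam x * eker (-μ) x) := by ring
        _ = ((starRingEnd ℂ) (M lam) * M μ) * eker (lam - μ) x := by
            rw [eker_mul, sub_eq_add_neg]
    have heq : ∀ T : ℝ, avg T (fun x => (starRingEnd ℂ) (s x) * s x)
        = ∑ lam ∈ S, ∑ μ ∈ S, ((starRingEnd ℂ) (M lam) * M μ) * avg T (eker (lam - μ)) := by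
      intro T
      rw [show (fun x => (starRingEnd ℂ) (s x) * s x)
          = fun x => ∑ lam ∈ S, ∑ μ ∈ S, ((starRingEnd ℂ) (M lam) * M μ) * eker (lam - μ) x from
        funext hexp]
      rw [avg_sum S (fun lam x => ∑ μ ∈ S, ((starRingEnd ℂ) (M lam) * M μ) * eker (lam - μ) x) T (fun lam _ => continuous_finset_sum _ fun μ _ =>
        continuous_const.mul (continuous_eker _))]
      refine Finset.sum_congr rfl fun lam _ => ?_
      rw [avg_sum S (fun μ x => ((starRingEnd ℂ) (M lam) * M μ) * eker (lam - μ) x) T (fun μ _ => continuous_const.mul (continuous_eker _))]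
      exact Finset.sum_congr rfl fun μ _ => avg_const_mul _ _ _
    have h1 : Filter.Tendsto
        (fun T => ∑ lam ∈ S, ∑ μ ∈ S, ((starRingEnd ℂ) (M lam) * M μ) * avg T (eker (lam - μ)))
        Filter.atTop
        (nhds (∑ lam ∈ S, ∑ μ ∈ S, ((starRingEnd ℂ) (M lam) * M μ) * (if lam - μ = 0 then 1 else 0))) :=
      tendsto_finset_sum _ fun lam _ => tendsto_finset_sum _ fun μ _ =>
        (tendsto_avg_eker _).const_mul _
    have h2 : (∑ lam ∈ S, ∑ μ ∈ S, ((starRingEnd ℂ) (M lam) * M μ) * (if lam - μ = 0 then 1 else 0))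
        = (B : ℂ) := by
      rw [hB]; push_cast
      refine Finset.sum_congr rfl fun lam hlam => ?_
      have : ∀ μ ∈ S, ((starRingEnd ℂ) (M lam) * M μ) * (if lam - μ = 0 then 1 else 0)
          = if lam = μ then (starRingEnd ℂ) (M lam) * M μ else 0 := by
        intro μ _
        by_cases h : lam = μ
        · simp [h]
        · rw [if_neg h, if_neg (sub_ne_zero.mpr h), mul_zero]
      rw [Finset.sum_congr rfl this, Finset.sum_ite_eq S lam, if_pos hlam, mul_comm,
        Complex.mul_conj]
    rw [← h2]
    exact h1.congr fun T => (heq T).symm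
  -- the pointwise Bessel inequality for each T > 0
  have hkey : ∀ᶠ T in Filter.atTop,
      2 * (avg T (fun x => (starRingEnd ℂ) (s x) * f x)).re
        - (avg T (fun x => (starRingEnd ℂ) (s x) * s x)).re ≤ C ^ 2 := by
    filter_upwards [Filter.eventually_gt_atTop (0 : ℝ)] with T hT
    set r : ℝ := (((2 * T) ^ m)⁻¹ : ℝ) with hr
    have hrpos : 0 < r := by rw [hr]; positivity
    have hrmul : r * (2 * T) ^ m = 1 := inv_mul_cancel₀ (by positivity)
    set F1 : (Fin m → ℝ) → ℝ := fun x => Complex.normSq (f x) with hF1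
    set F2 : (Fin m → ℝ) → ℝ := fun x => ((starRingEnd ℂ) (s x) * f x).re with hF2
    set F3 : (Fin m → ℝ) → ℝ := fun x => ((starRingEnd ℂ) (s x) * s x).re with hF3
    have hptw : ∀ x, Complex.normSq (f x - s x) = F1 x - 2 * F2 x + F3 x := by
      intro x
      have hss : ((starRingEnd ℂ) (s x) * s x).re = Complex.normSq (s x) := by
        rw [mul_comm, Complex.mul_conj, Complex.ofReal_re]
      have hsf : ((starRingEnd ℂ) (s x) * f x).re = (f x * (starRingEnd ℂ) (s x)).re := by
        rw [mul_comm]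
      simp only [hF1, hF2, hF3, Complex.normSq_sub, hss, hsf]
      ring
    have icf : MeasureTheory.IntegrableOn (fun x => (starRingEnd ℂ) (s x) * f x) (box m T) :=
      integrableOn_box (hcsc.mul hfc) T
    have icss : MeasureTheory.IntegrableOn (fun x => (starRingEnd ℂ) (s x) * s x) (box m T) :=
      integrableOn_box (hcsc.mul hsc) T
    have i1 : MeasureTheory.IntegrableOn F1 (box m T) :=
      integrableOn_box_real (Complex.continuous_normSq.comp hfc) T
    have i2 : MeasureTheory.IntegrableOn F2 (box m T) :=
      integrableOn_box_real (Complex.continuous_re.comp (hcsc.mul hfc)) T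
    have i3 : MeasureTheory.IntegrableOn F3 (box m T) :=
      integrableOn_box_real (Complex.continuous_re.comp (hcsc.mul hsc)) T
    have hint : ∫ x in box m T, Complex.normSq (f x - s x)
        = (∫ x in box m T, F1 x) - 2 * (∫ x in box m T, F2 x) + ∫ x in box m T, F3 x := by
      rw [show (fun x => Complex.normSq (f x - s x)) = fun x => F1 x - 2 * F2 x + F3 x from
        funext hptw]
      have iA : MeasureTheory.IntegrableOn (fun x => F1 x - 2 * F2 x) (box m T) :=
        i1.sub (i2.const_mul 2)
      have iB : MeasureTheory.IntegrableOn (fun x => (2:ℝ) * F2 x) (box m T) := i2.const_mul 2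
      rw [MeasureTheory.integral_add iA i3, MeasureTheory.integral_sub i1 iB,
        MeasureTheory.integral_const_mul]
    have hF2int : ∫ x in box m T, F2 x = (∫ x in box m T, (starRingEnd ℂ) (s x) * f x).re := by
      have h := integral_re icf
      simp only [RCLike.re_to_complex] at h
      exact h
    have hF3int : ∫ x in box m T, F3 x = (∫ x in box m T, (starRingEnd ℂ) (s x) * s x).re := by
      have h := integral_re icss
      simp only [RCLike.re_to_complex] at h
      exact h
    have h0 : 0 ≤ ∫ x in box m T, Complex.normSq (f x - s x) :=
      MeasureTheory.setIntegral_nonneg (measurableSet_box T) fun x _ => Complex.normSq_nonneg _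
    have hF1le : ∫ x in box m T, F1 x ≤ C ^ 2 * (2 * T) ^ m := by
      calc ∫ x in box m T, F1 x ≤ ∫ _x in box m T, C ^ 2 := by
            apply MeasureTheory.setIntegral_mono_on i1
              (integrableOn_const (isCompact_box T).measure_lt_top.ne)
              (measurableSet_box T)
            intro x _
            show Complex.normSq (f x) ≤ C ^ 2
            rw [← Complex.sq_norm]
            exact pow_le_pow_left₀ (norm_nonneg _) (hC x) 2
        _ = C ^ 2 * (2 * T) ^ m := by
            rw [MeasureTheory.setIntegral_const, measureReal_def, volume_box hT.le, smul_eq_mul]; ring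
    have e2 : (avg T (fun x => (starRingEnd ℂ) (s x) * f x)).re = r * ∫ x in box m T, F2 x := by
      unfold avg; rw [Complex.smul_re, hF2int, smul_eq_mul]
    have e3 : (avg T (fun x => (starRingEnd ℂ) (s x) * s x)).re = r * ∫ x in box m T, F3 x := by
      unfold avg; rw [Complex.smul_re, hF3int, smul_eq_mul]
    rw [e2, e3]
    nlinarith [mul_le_mul_of_nonneg_left hF1le hrpos.le,
      mul_nonneg hrpos.le h0]
  -- pass to the limit
  have hlim : Filter.Tendsto
      (fun T => 2 * (avg T (fun x => (starRingEnd ℂ) (s x) * f x)).re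
        - (avg T (fun x => (starRingEnd ℂ) (s x) * s x)).re)
      Filter.atTop (nhds (2 * B - B)) := by
    have hre1 : Filter.Tendsto (fun T => (avg T (fun x => (starRingEnd ℂ) (s x) * f x)).re)
        Filter.atTop (nhds B) := by
      have := (Complex.continuous_re.tendsto ((B : ℂ))).comp hΦ
      simpa [Function.comp_def] using this
    have hre2 : Filter.Tendsto (fun T => (avg T (fun x => (starRingEnd ℂ) (s x) * s x)).re)
        Filter.atTop (nhds B) := by
      have := (Complex.continuous_re.tendsto ((B : ℂ))).comp hΨ
      simpa [Function.comp_def] using this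
    exact (hre1.const_mul 2).sub hre2
  have := le_of_tendsto hlim hkey
  linarith

end APSpec

open APSpec in
/-- The spectrum of an almost periodic function, i.e. the set of `λ` where the mean value
`M(λ,f)` is nonzero, is at most countable. -/
theorem almostPeriodic_spectrum_countable {m : ℕ} (f : (Fin m → ℝ) → ℂ)
    (hf : AlmostPeriodic f) (M : (Fin m → ℝ) → ℂ)
    (hM : ∀ lam : Fin m → ℝ, Tendsto
      (fun T : ℝ => (((2 * T) ^ m)⁻¹ : ℝ) •
        ∫ x in {x : Fin m → ℝ | ∀ i, x i ∈ Set.Icc (-T) T},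
          f x * Complex.exp (-(Complex.I * ∑ i, x i * lam i)))
      atTop (nhds (M lam))) :
    Set.Countable {lam : Fin m → ℝ | M lam ≠ 0} := by
  classical
  obtain ⟨hfc, hK⟩ := hf
  -- f is bounded
  obtain ⟨C, hC⟩ : ∃ C : ℝ, ∀ x, ‖f x‖ ≤ C := by
    have hev : Continuous (fun g : (Fin m → ℝ) →ᵤ ℂ => (UniformFun.toFun g) 0) :=
      (UniformFun.uniformContinuous_eval ℂ 0).continuous
    have himg : IsCompact ((fun g : (Fin m → ℝ) →ᵤ ℂ => (UniformFun.toFun g) 0) ''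
        closure (translates f)) := hK.image hev
    obtain ⟨C, hC⟩ := himg.isBounded.exists_norm_le
    refine ⟨C, fun x => ?_⟩
    apply hC
    exact ⟨UniformFun.ofFun fun y => f (y + x), subset_closure ⟨x, rfl⟩, by simp⟩
  -- restate hM via avg
  have hM' : ∀ lam : Fin m → ℝ, Tendsto (fun T => avg T (fun x => f x * eker lam x))
      atTop (nhds (M lam)) := hM
  have hbessel := fun S => bessel hfc hC hM' S
  -- countability
  have hsub : {lam : Fin m → ℝ | M lam ≠ 0} ⊆
      ⋃ n : ℕ, {lam : Fin m → ℝ | ((n : ℝ) + 1)⁻¹ ≤ Complex.normSq (M lam)} := by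
    intro lam hlam
    have hpos : 0 < Complex.normSq (M lam) := Complex.normSq_pos.mpr hlam
    obtain ⟨n, hn⟩ := exists_nat_gt (Complex.normSq (M lam))⁻¹
    refine Set.mem_iUnion.mpr ⟨n, ?_⟩
    have h1 : (Complex.normSq (M lam))⁻¹ < (n : ℝ) + 1 := by linarith
    have h2 : ((n : ℝ) + 1)⁻¹ < Complex.normSq (M lam) := by
      rw [← inv_inv (Complex.normSq (M lam))]
      exact inv_strictAnti₀ (by positivity) h1
    exact h2.le
  refine Set.Countable.mono hsub (Set.countable_iUnion fun n => Set.Finite.countable ?_)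
  by_contra hinf
  rw [← Set.not_infinite, not_not] at hinf
  obtain ⟨N, hN⟩ := exists_nat_gt (C ^ 2 * ((n : ℝ) + 1))
  obtain ⟨t, ht, hcard⟩ := hinf.exists_subset_card_eq N
  have hsum : (N : ℝ) * ((n : ℝ) + 1)⁻¹ ≤ ∑ lam ∈ t, Complex.normSq (M lam) := by
    have := Finset.card_nsmul_le_sum t (fun lam => Complex.normSq (M lam)) (((n : ℝ) + 1)⁻¹)
      (fun lam hlam => ht hlam)
    rw [hcard] at this
    simpa [nsmul_eq_mul] using this
  have hle := hbessel t
  have hn1 : (0 : ℝ) < (n : ℝ) + 1 := by positivity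
  have : (N : ℝ) ≤ C ^ 2 * ((n : ℝ) + 1) := by
    have h := le_trans hsum hle
    calc (N : ℝ) = (N : ℝ) * ((n : ℝ) + 1)⁻¹ * ((n : ℝ) + 1) := by
          field_simp
      _ ≤ C ^ 2 * ((n : ℝ) + 1) := by
          apply mul_le_mul_of_nonneg_right h hn1.le
  linarith
end

section
/- Let m > 1 and let λ₁,…,λ_N ∈ ℝ^m be linearly independent over ℤ. Then there exists λ₀ ∈ ℝ^m such that the vectors λ₀, λ₁−λ₀, …, λ_N−λ₀ are linearly independent over ℤ, generate a subgroup containing all λⱼ, and any two of them are linearly independent over ℝ. -/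
open MeasureTheory

private lemma line_ne_top' {m : ℕ} (hm : 1 < m) (a b : Fin m → ℝ) :
    line[ℝ, a, b] ≠ (⊤ : AffineSubspace ℝ (Fin m → ℝ)) := by
  have : Nontrivial (Fin m → ℝ) := by
    refine ⟨0, (fun _ => 1), fun h => ?_⟩
    have := congrFun h ⟨0, by omega⟩
    simp at this
  intro h
  have hd : vectorSpan ℝ ({a, b} : Set (Fin m → ℝ)) = ⊤ := by
    rw [← direction_affineSpan, h, AffineSubspace.direction_top]
  rw [vectorSpan_pair] at hd
  by_cases hab : a -ᵥ b = 0
  · rw [hab, Submodule.span_zero_singleton] at hd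
    exact bot_ne_top hd
  · have h1 : Module.finrank ℝ (ℝ ∙ (a -ᵥ b)) = 1 := finrank_span_singleton hab
    rw [hd, finrank_top] at h1
    have : Module.finrank ℝ (Fin m → ℝ) = m := by simp
    omega

/-- For `m > 1` and `λ₁,…,λ_N ∈ ℝ^m` linearly independent over `ℤ`, there is `λ₀` such
that `λ₀, λ₁−λ₀, …, λ_N−λ₀` are linearly independent over `ℤ`, generate a subgroup
containing all the `λⱼ`, and any two of them are linearly independent over `ℝ`. -/
theorem exists_basis_pairwise_real_independent {m N : ℕ} (hm : 1 < m)
    (lam : Fin N → Fin m → ℝ)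
    (hind : ∀ n : Fin N → ℤ, ∑ j, (n j : ℝ) • lam j = 0 → ∀ j, n j = 0) :
    ∃ (lam₀ : Fin m → ℝ) (mu : Fin (N + 1) → Fin m → ℝ),
      mu 0 = lam₀ ∧ (∀ j : Fin N, mu j.succ = lam j - lam₀) ∧
      (∀ c : Fin (N + 1) → ℤ, ∑ i, (c i : ℝ) • mu i = 0 → ∀ i, c i = 0) ∧
      (∀ j : Fin N, lam j ∈ AddSubgroup.closure (Set.range mu)) ∧
      (∀ i j : Fin (N + 1), i ≠ j →
        LinearIndependent ℝ (![mu i, mu j] : Fin 2 → Fin m → ℝ)) := by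
  classical
  set f : Option (Fin N) → Fin m → ℝ := fun o => o.elim 0 lam with hf
  set Bad : Set (Fin m → ℝ) :=
    (⋃ p : (Fin N → ℤ) × ℤ, {((p.2 : ℝ))⁻¹ • ∑ j, (p.1 j : ℝ) • lam j}) ∪
      ⋃ p : Option (Fin N) × Option (Fin N), (line[ℝ, f p.1, f p.2] : Set (Fin m → ℝ))
    with hBad
  have hBadnull : volume Bad = 0 := by
    apply measure_union_null
    · refine measure_iUnion_null fun p => ?_
      refine measure_mono_null ?_
        (Measure.addHaar_affineSubspace volume
          (line[ℝ, ((p.2 : ℝ))⁻¹ • ∑ j, (p.1 j : ℝ) • lam j,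
            ((p.2 : ℝ))⁻¹ • ∑ j, (p.1 j : ℝ) • lam j]) (line_ne_top' hm _ _))
      rw [Set.singleton_subset_iff]
      exact left_mem_affineSpan_pair ℝ _ _
    · refine measure_iUnion_null fun p => ?_
      exact Measure.addHaar_affineSubspace volume _ (line_ne_top' hm _ _)
  have hne : Bad ≠ Set.univ := by
    intro h
    have hpos : 0 < volume (Set.univ : Set (Fin m → ℝ)) :=
      IsOpen.measure_pos volume isOpen_univ Set.univ_nonempty
    rw [← h, hBadnull] at hpos
    exact lt_irrefl 0 hpos
  obtain ⟨lam₀, hlam₀⟩ := (Set.ne_univ_iff_exists_notMem Bad).mp hne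
  rw [hBad, Set.mem_union, not_or] at hlam₀
  obtain ⟨hl1, hl2⟩ := hlam₀
  have hB1 : ∀ (c : Fin N → ℤ) (k : ℤ), lam₀ ≠ ((k : ℝ))⁻¹ • ∑ j, (c j : ℝ) • lam j := by
    intro c k h
    exact hl1 (Set.mem_iUnion.mpr ⟨(c, k), h⟩)
  have hB2 : ∀ p q : Option (Fin N), lam₀ ∉ (line[ℝ, f p, f q] : Set (Fin m → ℝ)) := by
    intro p q h
    exact hl2 (Set.mem_iUnion.mpr ⟨(p, q), h⟩)
  have hlam_ne : ∀ j, lam j ≠ 0 := by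
    intro j hj
    have := hind (fun t => if t = j then 1 else 0) (by
      push_cast
      simp [ite_smul, Finset.sum_ite_eq', hj]) j
    simp at this
  have hlam_pair : ∀ i j : Fin N, i ≠ j → lam i ≠ lam j := by
    intro i j hij h
    have := hind (fun t => (if t = i then 1 else 0) - (if t = j then 1 else 0)) (by
      push_cast
      simp [sub_smul, ite_smul, Finset.sum_sub_distrib, Finset.sum_ite_eq', h]) i
    simp [hij] at this
  have hmemline : ∀ (p q : Option (Fin N)) (r : ℝ), lam₀ = r • (f q - f p) + f p →
      False := by
    intro p q r h
    apply hB2 p q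
    rw [h]
    simpa using smul_vsub_vadd_mem_affineSpan_pair r (f p) (f q)
  refine ⟨lam₀, Fin.cases lam₀ (fun j => lam j - lam₀), by simp, fun j => by simp, ?_, ?_, ?_⟩
  · -- ℤ-linear independence
    intro c hc
    rw [Fin.sum_univ_succ] at hc
    simp only [Fin.cases_zero, Fin.cases_succ] at hc
    have hS : ∑ j, (c j.succ : ℝ) • (lam j - lam₀)
        = (∑ j, (c j.succ : ℝ) • lam j) - (∑ j : Fin N, (c j.succ : ℝ)) • lam₀ := by
      rw [Finset.sum_smul, ← Finset.sum_sub_distrib]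
      exact Finset.sum_congr rfl fun j _ => smul_sub _ _ _
    rw [hS] at hc
    obtain ⟨k, hk⟩ : ∃ k : ℤ, k = (∑ j : Fin N, c j.succ) - c 0 := ⟨_, rfl⟩
    have hkey : (k : ℝ) • lam₀ = ∑ j, (c j.succ : ℝ) • lam j := by
      rw [hk]
      push_cast
      rw [sub_smul]
      rw [Finset.sum_smul] at hc ⊢
      linear_combination (norm := module) -hc
    have hk0 : k = 0 := by
      by_contra hkne
      apply hB1 (fun j => c j.succ) k
      rw [← hkey, smul_smul, inv_mul_cancel₀ (by exact_mod_cast hkne), one_smul]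
    have hzero : ∑ j, (c j.succ : ℝ) • lam j = 0 := by
      rw [← hkey, hk0]
      simp
    have hsucc : ∀ j : Fin N, c j.succ = 0 := hind _ hzero
    have hsum : (∑ j : Fin N, c j.succ) = 0 := Finset.sum_eq_zero fun j _ => hsucc j
    rw [hk0, hsum] at hk
    intro i
    refine Fin.cases (by omega) hsucc i
  · -- closure
    intro j
    have h : lam j = (Fin.cases lam₀ (fun j => lam j - lam₀) : Fin (N+1) → Fin m → ℝ) 0 +
        (Fin.cases lam₀ (fun j => lam j - lam₀) : Fin (N+1) → Fin m → ℝ) j.succ := by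
      simp
    rw [h]
    exact AddSubgroup.add_mem _
      (AddSubgroup.subset_closure (Set.mem_range_self 0))
      (AddSubgroup.subset_closure (Set.mem_range_self j.succ))
  · -- pairwise ℝ-independence
    intro i j hij
    rw [LinearIndependent.pair_iff]
    intro s t hst
    rcases Fin.eq_zero_or_eq_succ i with rfl | ⟨i', rfl⟩ <;>
      rcases Fin.eq_zero_or_eq_succ j with rfl | ⟨j', rfl⟩
    · exact absurd rfl hij
    · -- (λ₀, λⱼ - λ₀)
      simp only [Fin.cases_zero, Fin.cases_succ] at hst
      have hstq : s = t := by
        by_contra hne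
        apply hmemline none (some j') ((s - t)⁻¹ * (-t))
        have h2 : (s - t) • lam₀ = (-t) • lam j' := by
          linear_combination (norm := module) hst
        have h3 : lam₀ = ((s - t)⁻¹ * (-t)) • lam j' := by
          rw [mul_smul, ← h2, smul_smul, inv_mul_cancel₀ (sub_ne_zero_of_ne hne), one_smul]
        simpa [hf] using h3
      subst hstq
      have h4 : s • lam j' = 0 := by
        linear_combination (norm := module) hst
      rcases smul_eq_zero.mp h4 with h | h
      · exact ⟨h, h⟩
      · exact absurd h (hlam_ne j')
    · -- (λᵢ - λ₀, λ₀)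
      simp only [Fin.cases_zero, Fin.cases_succ] at hst
      have hstq : s = t := by
        by_contra hne
        apply hmemline none (some i') ((t - s)⁻¹ * (-s))
        have h2 : (t - s) • lam₀ = (-s) • lam i' := by
          linear_combination (norm := module) hst
        have h3 : lam₀ = ((t - s)⁻¹ * (-s)) • lam i' := by
          rw [mul_smul, ← h2, smul_smul,
            inv_mul_cancel₀ (sub_ne_zero_of_ne (Ne.symm hne)), one_smul]
        simpa [hf] using h3
      subst hstq
      have h4 : s • lam i' = 0 := by
        linear_combination (norm := module) hst
      rcases smul_eq_zero.mp h4 with h | h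
      · exact ⟨h, h⟩
      · exact absurd h (hlam_ne i')
    · -- (λᵢ - λ₀, λⱼ - λ₀)
      have hij' : i' ≠ j' := fun h => hij (by rw [h])
      simp only [Fin.cases_succ] at hst
      have hstq : s + t = 0 := by
        by_contra hne
        apply hmemline (some i') (some j') ((s + t)⁻¹ * t)
        have h2 : (s + t) • lam₀ = s • lam i' + t • lam j' := by
          linear_combination (norm := module) -hst
        have h3 : lam₀ = (s + t)⁻¹ • (s • lam i' + t • lam j') := by
          rw [← h2, smul_smul, inv_mul_cancel₀ hne, one_smul]
        rw [h3]
        simp only [hf]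
        show (s + t)⁻¹ • (s • lam i' + t • lam j')
          = ((s + t)⁻¹ * t) • (lam j' - lam i') + lam i'
        match_scalars <;> field_simp <;> ring
      have hts : t = -s := by linarith [hstq.le, hstq.ge]
      subst hts
      have h4 : s • (lam i' - lam j') = 0 := by
        linear_combination (norm := module) hst
      rcases smul_eq_zero.mp h4 with h | h
      · exact ⟨h, by rw [h, neg_zero]⟩
      · exact absurd (sub_eq_zero.mp h) (hlam_pair i' j' hij')
end
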